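/- Let S' ⊆ S be nonempty compact convex subsets of ℝ², x ∈ S, p = P_{S'}(x), r = ‖x − p‖ > 0, and u = (x − p)/r. Then the convex hull C = conv(S' ∪ {x}) satisfies C ⊆ S, h_C(u) = h_{S'}(u) + r, and h_C(v) = h_{S'}(v) for every unit vector v with ⟨v, u⟩ ≤ 0. -/

import Mathlib

noncomputable def supportFn (K : Set (EuclideanSpace ℝ (Fin 2)))
    (u : EuclideanSpace ℝ (Fin 2)) : ℝ :=
  sSup ((fun x => (inner ℝ x u : ℝ)) '' K)

theorem hull_support_properties
    (S S' : Set (EuclideanSpace ℝ (Fin 2)))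
    (hS' : S'.Nonempty) (hS'c : IsCompact S') (hS'cv : Convex ℝ S')
    (hS : S.Nonempty) (hSc : IsCompact S) (hScv : Convex ℝ S)
    (hsub : S' ⊆ S)
    (x : EuclideanSpace ℝ (Fin 2)) (hx : x ∈ S) (hxS' : x ∉ S')
    (p : EuclideanSpace ℝ (Fin 2)) (hp : p ∈ S')
    (hproj : ∀ y ∈ S', ‖x - p‖ ≤ ‖x - y‖)
    (r : ℝ) (hr : r = ‖x - p‖) (hrpos : 0 < r)
    (u : EuclideanSpace ℝ (Fin 2)) (hu : u = r⁻¹ • (x - p)) :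
    convexHull ℝ (S' ∪ {x}) ⊆ S ∧
    supportFn (convexHull ℝ (S' ∪ {x})) u = supportFn S' u + r ∧
    (∀ v : EuclideanSpace ℝ (Fin 2), ‖v‖ = 1 → (inner ℝ v u : ℝ) ≤ 0 →
      supportFn (convexHull ℝ (S' ∪ {x})) v = supportFn S' v) := by
  -- hull ⊆ S
  have hCsub : convexHull ℝ (S' ∪ {x}) ⊆ S :=
    convexHull_min (Set.union_subset hsub (by simpa using hx)) hScv
  -- variational inequality
  have hinf : ‖x - p‖ = ⨅ w : S', ‖x - w‖ := by
    haveI : Nonempty S' := ⟨⟨p, hp⟩⟩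
    have hb : BddBelow (Set.range fun w : S' => ‖x - (w : EuclideanSpace ℝ (Fin 2))‖) := by
      refine ⟨0, ?_⟩
      rintro _ ⟨w, rfl⟩
      exact norm_nonneg _
    exact le_antisymm (le_ciInf fun w => hproj w w.2) (ciInf_le hb ⟨p, hp⟩)
  have hvar : ∀ y ∈ S', (inner ℝ (x-p) (y-p) : ℝ) ≤ 0 :=
    (norm_eq_iInf_iff_real_inner_le_zero hS'cv hp).mp hinf
  -- basic facts
  have hlin : ∀ v : EuclideanSpace ℝ (Fin 2),
      IsLinearMap ℝ (fun z : EuclideanSpace ℝ (Fin 2) => (inner ℝ z v : ℝ)) :=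
    fun v => ⟨fun a b => inner_add_left a b v, fun c a => real_inner_smul_left a v c⟩
  have hbddS' : ∀ v : EuclideanSpace ℝ (Fin 2),
      BddAbove ((fun z => (inner ℝ z v : ℝ)) '' S') :=
    fun v => (hS'c.image (continuous_id.inner continuous_const)).bddAbove
  have hneS' : ∀ v, ((fun z : EuclideanSpace ℝ (Fin 2) => (inner ℝ z v : ℝ)) '' S').Nonempty :=
    fun v => hS'.image _
  have hxp : (inner ℝ (x - p) u : ℝ) = r := by
    rw [hu, real_inner_smul_right, real_inner_self_eq_norm_sq, ← hr]
    field_simp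
  have hyu : ∀ y ∈ S', (inner ℝ y u : ℝ) ≤ inner ℝ p u := by
    intro y hy
    have h1 : (inner ℝ (y - p) u : ℝ) ≤ 0 := by
      rw [hu, real_inner_smul_right]
      have := hvar y hy
      rw [real_inner_comm] at this
      exact mul_nonpos_of_nonneg_of_nonpos (by positivity) this
    have := inner_sub_left (𝕜 := ℝ) y p u
    linarith [this ▸ h1]
  -- generic: sSup over hull equals max over a bound
  have key : ∀ (v : EuclideanSpace ℝ (Fin 2)) (M : ℝ),
      (∀ y ∈ S', (inner ℝ y v : ℝ) ≤ M) → (inner ℝ x v : ℝ) ≤ M →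
      (∃ z ∈ convexHull ℝ (S' ∪ {x}), (inner ℝ z v : ℝ) = M) →
      supportFn (convexHull ℝ (S' ∪ {x})) v = M := by
    intro v M hSb hxb ⟨z, hz, hzM⟩
    have hhull : convexHull ℝ (S' ∪ {x}) ⊆ {w | (inner ℝ w v : ℝ) ≤ M} := by
      apply convexHull_min _ (convex_halfSpace_le (hlin v) M)
      rintro w (hw | hw)
      · exact hSb w hw
      · simp only [Set.mem_singleton_iff] at hw; subst hw; exact hxb
    have hub : M ∈ upperBounds ((fun z => (inner ℝ z v : ℝ)) '' (convexHull ℝ (S' ∪ {x}))) := by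
      rintro _ ⟨w, hw, rfl⟩; exact hhull hw
    refine le_antisymm (csSup_le ⟨_, ⟨z, hz, rfl⟩⟩ hub) ?_
    exact hzM ▸ le_csSup ⟨M, hub⟩ ⟨z, hz, rfl⟩
  have hS'sub : S' ⊆ convexHull ℝ (S' ∪ {x}) :=
    Set.Subset.trans Set.subset_union_left (subset_convexHull ℝ _)
  have hxmem : x ∈ convexHull ℝ (S' ∪ {x}) :=
    subset_convexHull ℝ _ (Set.mem_union_right _ rfl)
  -- support of S' at v equals sSup; characterize via p for u
  have hS'u : supportFn S' u = (inner ℝ p u : ℝ) := by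
    refine le_antisymm (csSup_le (hneS' u) ?_) (le_csSup (hbddS' u) ⟨p, hp, rfl⟩)
    rintro _ ⟨y, hy, rfl⟩; exact hyu y hy
  have hxu : (inner ℝ x u : ℝ) = (inner ℝ p u : ℝ) + r := by
    have := inner_sub_left (𝕜 := ℝ) x p u
    linarith [this ▸ hxp]
  refine ⟨hCsub, ?_, ?_⟩
  · rw [hS'u]
    apply key u ((inner ℝ p u : ℝ) + r)
    · intro y hy; linarith [hyu y hy]
    · linarith [hxu]
    · exact ⟨x, hxmem, hxu⟩
  · intro v hv hvu
    have hxv : (inner ℝ x v : ℝ) ≤ (inner ℝ p v : ℝ) := by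
      have h1 : (inner ℝ (x - p) v : ℝ) ≤ 0 := by
        have : (inner ℝ (x - p) v : ℝ) = r * (inner ℝ v u : ℝ) := by
          rw [hu, real_inner_smul_right, real_inner_comm]
          field_simp
        rw [this]
        exact mul_nonpos_of_nonneg_of_nonpos hrpos.le hvu
      have := inner_sub_left (𝕜 := ℝ) x p v
      linarith [this ▸ h1]
    have hpv : (inner ℝ p v : ℝ) ≤ supportFn S' v := le_csSup (hbddS' v) ⟨p, hp, rfl⟩
    -- sSup over S' is attained since S' compact
    obtain ⟨y₀, hy₀, hy₀max⟩ := hS'c.exists_isMaxOn hS'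
      ((continuous_id.inner continuous_const).continuousOn
        (s := S') (f := fun z => (inner ℝ z v : ℝ)))
    apply key v (supportFn S' v)
    · intro y hy; exact le_csSup (hbddS' v) ⟨y, hy, rfl⟩
    · linarith
    · refine ⟨y₀, hS'sub hy₀, le_antisymm (le_csSup (hbddS' v) ⟨y₀, hy₀, rfl⟩) ?_⟩
      exact csSup_le (hneS' v) (by rintro _ ⟨y, hy, rfl⟩; exact hy₀max hy)
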